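/- arXiv:1810.05145 — 2 statements merged into one kernel-verified Lean document; each statement's English description precedes it below -/
import Mathlib

section
/- For the Nesterov–Todd scaling: if W, X, Z are positive definite symmetric matrices with W⁻¹ X W⁻¹ = Z and G Gᵀ = W, then (G⁻¹ ⊗_S (Gᵀ Z))⁻¹ ((G⁻¹ X) ⊗_S Gᵀ) = W ⊗_S W; equivalently, (G⁻¹ ⊗_S (Gᵀ Z)) (W ⊗_S W) = (G⁻¹ X) ⊗_S Gᵀ. -/
open Matrix Kronecker

/-- The symmetric Kronecker product `A ⊗_S B = (1/2)(A ⊗ B + B ⊗ A)`. -/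
noncomputable def symKron {n : Type*} [Fintype n] (A B : Matrix n n ℝ) :
    Matrix (n × n) (n × n) ℝ :=
  ((1 : ℝ) / 2) • (A ⊗ₖ B + B ⊗ₖ A)

section Aux
set_option linter.unusedSectionVars false
variable {n : Type*} [Fintype n] [DecidableEq n]

lemma symKron_self (C : Matrix n n ℝ) : symKron C C = C ⊗ₖ C := by
  unfold symKron
  rw [← two_smul ℝ (C ⊗ₖ C), smul_smul]
  norm_num

lemma symKron_comm (A B : Matrix n n ℝ) : symKron A B = symKron B A := by
  unfold symKron; rw [add_comm]

lemma symKron_mul_self (A B C : Matrix n n ℝ) :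
    symKron A B * symKron C C = symKron (A * C) (B * C) := by
  rw [symKron_self]
  unfold symKron
  rw [smul_mul_assoc, add_mul, Matrix.mul_kronecker_mul, Matrix.mul_kronecker_mul]

lemma one_kron_posDef {S : Matrix n n ℝ} (hS : S.PosDef) :
    ((1 : Matrix n n ℝ) ⊗ₖ S).PosDef := by
  rw [posDef_iff_dotProduct_mulVec]
  constructor
  · ext ⟨i, j⟩ ⟨k, l⟩
    have := congrFun (congrFun hS.1 l) j
    simp only [conjTranspose_apply, kroneckerMap_apply, star_trivial, Matrix.one_apply] at *
    rcases eq_or_ne i k with rfl | h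
    · simp [this]
    · simp [h, Ne.symm h]
  · intro x hx
    have key : star x ⬝ᵥ ((1 : Matrix n n ℝ) ⊗ₖ S) *ᵥ x
        = ∑ i, star (fun j => x (i, j)) ⬝ᵥ S *ᵥ fun j => x (i, j) := by
      simp only [dotProduct, mulVec, kroneckerMap_apply, Fintype.sum_prod_type, star_trivial,
        Matrix.one_apply, ite_mul, one_mul, zero_mul, mul_ite, mul_zero, Pi.star_apply,
        Finset.sum_ite_eq, Finset.mem_univ, if_true]
      refine Finset.sum_congr rfl fun i _ => Finset.sum_congr rfl fun j _ => ?_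
      congr 1
      rw [Finset.sum_comm]
      simp
    rw [key]
    obtain ⟨⟨i0, j0⟩, h0⟩ := Function.ne_iff.mp hx
    refine Finset.sum_pos' (fun i _ => hS.posSemidef.dotProduct_mulVec_nonneg _) ⟨i0, Finset.mem_univ _, hS.dotProduct_mulVec_pos (x := _) ?_⟩
    exact fun h => h0 (congrFun h j0)

lemma kron_one_posDef {S : Matrix n n ℝ} (hS : S.PosDef) :
    (S ⊗ₖ (1 : Matrix n n ℝ)).PosDef := by
  rw [posDef_iff_dotProduct_mulVec]
  constructor
  · ext ⟨i, j⟩ ⟨k, l⟩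
    have := congrFun (congrFun hS.1 k) i
    simp only [conjTranspose_apply, kroneckerMap_apply, star_trivial, Matrix.one_apply] at *
    rcases eq_or_ne j l with rfl | h
    · simp [this]
    · simp [h, Ne.symm h]
  · intro x hx
    have key : star x ⬝ᵥ (S ⊗ₖ (1 : Matrix n n ℝ)) *ᵥ x
        = ∑ j, star (fun i => x (i, j)) ⬝ᵥ S *ᵥ fun i => x (i, j) := by
      simp only [dotProduct, mulVec, kroneckerMap_apply, Fintype.sum_prod_type, star_trivial,
        Matrix.one_apply, ite_mul, one_mul, zero_mul, mul_ite, mul_zero, Pi.star_apply,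
        Finset.sum_ite_eq, Finset.mem_univ, if_true]
      rw [Finset.sum_comm]
      simp only [mul_one]
    rw [key]
    obtain ⟨⟨i0, j0⟩, h0⟩ := Function.ne_iff.mp hx
    refine Finset.sum_pos' (fun i _ => hS.posSemidef.dotProduct_mulVec_nonneg _) ⟨j0, Finset.mem_univ _, hS.dotProduct_mulVec_pos (x := _) ?_⟩
    exact fun h => h0 (congrFun h i0)

lemma posDef_smul_half {A : Matrix (n × n) (n × n) ℝ} (hA : A.PosDef) :
    (((1 : ℝ) / 2) • A).PosDef := by
  rw [posDef_iff_dotProduct_mulVec]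
  constructor
  · ext i j
    have := congrFun (congrFun hA.1 i) j
    simp_all [conjTranspose_apply]
  · intro x hx
    have := hA.dotProduct_mulVec_pos hx
    simp only [smul_mulVec, dotProduct_smul, smul_eq_mul]
    positivity

lemma conj_posDef {Z G : Matrix n n ℝ} (hZ : Z.PosDef) (hG : IsUnit G) :
    (Gᵀ * Z * G).PosDef := by
  have hGd : IsUnit G.det := (Matrix.isUnit_iff_isUnit_det G).mp hG
  rw [posDef_iff_dotProduct_mulVec]
  constructor
  · have h := hZ.1
    rw [Matrix.IsHermitian, conjTranspose_eq_transpose_of_trivial] at *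
    rw [transpose_mul, transpose_mul, transpose_transpose, h, mul_assoc]
  · intro x hx
    have hGx : G *ᵥ x ≠ 0 := by
      intro h
      apply hx
      have : G⁻¹ *ᵥ (G *ᵥ x) = x := by
        rw [mulVec_mulVec, Matrix.nonsing_inv_mul G hGd, one_mulVec]
      rw [h, mulVec_zero] at this
      exact this.symm
    have h2 := hZ.dotProduct_mulVec_pos hGx
    have e : star x ⬝ᵥ (Gᵀ * Z * G) *ᵥ x = star (G *ᵥ x) ⬝ᵥ Z *ᵥ (G *ᵥ x) := by
      simp only [star_trivial]
      rw [show Gᵀ * Z * G = Gᵀ * (Z * G) from by rw [mul_assoc], ← mulVec_mulVec,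
        dotProduct_mulVec, vecMul_transpose, ← mulVec_mulVec]
    rw [e]; exact h2

end Aux

/-- For the Nesterov–Todd scaling `W⁻¹ X W⁻¹ = Z`, `G Gᵀ = W`:
`(G⁻¹ ⊗_S (Gᵀ Z))⁻¹ ((G⁻¹ X) ⊗_S Gᵀ) = W ⊗_S W`, equivalently
`(G⁻¹ ⊗_S (Gᵀ Z)) (W ⊗_S W) = (G⁻¹ X) ⊗_S Gᵀ`. -/
theorem nt_scaling_symKron {n : Type*} [Fintype n] [DecidableEq n]
    (W X Z G : Matrix n n ℝ)
    (hW : W.PosDef) (hX : X.PosDef) (hZ : Z.PosDef)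
    (hG : IsUnit G) (hGW : G * Gᵀ = W) (hscal : W⁻¹ * X * W⁻¹ = Z) :
    (symKron G⁻¹ (Gᵀ * Z))⁻¹ * symKron (G⁻¹ * X) Gᵀ = symKron W W ∧
      symKron G⁻¹ (Gᵀ * Z) * symKron W W = symKron (G⁻¹ * X) Gᵀ := by
  have hGd : IsUnit G.det := (Matrix.isUnit_iff_isUnit_det G).mp hG
  have hGTd : IsUnit Gᵀ.det := by rwa [Matrix.det_transpose]
  have hWd : IsUnit W.det := (Matrix.isUnit_iff_isUnit_det W).mp hW.isUnit
  have e1 : G⁻¹ * W = Gᵀ := by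
    rw [← hGW, ← mul_assoc, Matrix.nonsing_inv_mul G hGd, one_mul]
  have eGW : Gᵀ * W⁻¹ = G⁻¹ := by
    rw [← hGW, Matrix.mul_inv_rev, ← Matrix.transpose_nonsing_inv, ← mul_assoc,
      ← Matrix.transpose_mul, Matrix.nonsing_inv_mul G hGd, Matrix.transpose_one, one_mul]
  have e2 : Gᵀ * Z * W = G⁻¹ * X := by
    rw [← hscal]
    have h : Gᵀ * (W⁻¹ * X * W⁻¹) * W = Gᵀ * W⁻¹ * X * (W⁻¹ * W) := by noncomm_ring
    rw [h, Matrix.nonsing_inv_mul W hWd, mul_one, eGW]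
  have h2 : symKron G⁻¹ (Gᵀ * Z) * symKron W W = symKron (G⁻¹ * X) Gᵀ := by
    rw [symKron_mul_self, e1, e2, symKron_comm]
  have hS : (Gᵀ * Z * G).PosDef := conj_posDef hZ hG
  have hM1 : (symKron 1 (Gᵀ * Z * G)).PosDef := by
    have h := (one_kron_posDef hS).add (kron_one_posDef hS)
    exact posDef_smul_half h
  have hfac : symKron 1 (Gᵀ * Z * G) * symKron G⁻¹ G⁻¹ = symKron G⁻¹ (Gᵀ * Z) := by
    rw [symKron_mul_self, one_mul, mul_assoc (Gᵀ * Z) G G⁻¹,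
      Matrix.mul_nonsing_inv G hGd, mul_one]
  have hGid : IsUnit G⁻¹.det := Matrix.isUnit_nonsing_inv_det G hGd
  have hkU : IsUnit (symKron G⁻¹ G⁻¹) := by
    rw [symKron_self, Matrix.isUnit_iff_isUnit_det, Matrix.det_kronecker]
    exact (hGid.pow _).mul (hGid.pow _)
  have hMU : IsUnit (symKron G⁻¹ (Gᵀ * Z)) := by
    rw [← hfac]; exact hM1.isUnit.mul hkU
  have hMd : IsUnit (symKron G⁻¹ (Gᵀ * Z)).det :=
    (Matrix.isUnit_iff_isUnit_det _).mp hMU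
  refine ⟨?_, h2⟩
  rw [← h2, ← mul_assoc, Matrix.nonsing_inv_mul _ hMd, one_mul]
end

section
/- Nesterov–Todd scaling point factorization: let X = L Lᵀ and Z = R Rᵀ be Cholesky factorizations of symmetric positive definite matrices X and Z, and let U D Vᵀ = Rᵀ L be a singular value decomposition (U, V orthogonal, D positive diagonal). Then G := L V D^{−1/2} satisfies G Gᵀ = W, where W := X^{1/2}(X^{1/2} Z X^{1/2})^{−1/2} X^{1/2} is the unique symmetric positive definite matrix with W Z W = X. -/
open Matrix

set_option maxHeartbeats 1000000

/-- The square root of a positive semidefinite matrix, as `Matrix.PosSemidef.sqrt` was defined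
in the older Mathlib (removed since). -/
noncomputable def Matrix.PosSemidef.sqrt {n : Type*} [Fintype n] [DecidableEq n]
    {A : Matrix n n ℝ} (hA : A.PosSemidef) : Matrix n n ℝ :=
  hA.1.eigenvectorUnitary.1 * diagonal ((↑) ∘ (√·) ∘ hA.1.eigenvalues) *
    (star hA.1.eigenvectorUnitary : Matrix n n ℝ)

section SqrtPort

open scoped MatrixOrder

theorem Matrix.PosSemidef.sqrt_eq_cfc_sqrt {n : Type*} [Fintype n] [DecidableEq n]
    {A : Matrix n n ℝ} (hA : A.PosSemidef) : hA.sqrt = CFC.sqrt A := by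
  rw [CFC.sqrt_eq_cfc, cfc_nnreal_eq_real _ A, hA.1.cfc_eq, IsHermitian.cfc,
    Unitary.conjStarAlgAut_apply, Matrix.PosSemidef.sqrt]
  have hf : (RCLike.ofReal ∘ (fun x : ℝ => ((NNReal.sqrt x.toNNReal : ℝ))) ∘ hA.1.eigenvalues :
      n → ℝ) = ((↑) ∘ (√·) ∘ hA.1.eigenvalues) := by
    funext i
    simp only [Function.comp_apply, Real.coe_sqrt, Real.coe_toNNReal',
      max_eq_left (hA.eigenvalues_nonneg i)]
    rfl
  rw [hf]

theorem Matrix.PosSemidef.sqrt_mul_self {n : Type*} [Fintype n] [DecidableEq n]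
    {A : Matrix n n ℝ} (hA : A.PosSemidef) : hA.sqrt * hA.sqrt = A := by
  rw [hA.sqrt_eq_cfc_sqrt]
  exact CFC.sqrt_mul_sqrt_self A hA.nonneg

theorem Matrix.PosSemidef.posSemidef_sqrt {n : Type*} [Fintype n] [DecidableEq n]
    {A : Matrix n n ℝ} (hA : A.PosSemidef) : hA.sqrt.PosSemidef := by
  rw [hA.sqrt_eq_cfc_sqrt]
  exact (CFC.sqrt_nonneg A).posSemidef

theorem Matrix.PosSemidef.eq_sqrt_of_sq_eq {n : Type*} [Fintype n] [DecidableEq n]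
    {B : Matrix n n ℝ} (hB : B.PosSemidef) {A : Matrix n n ℝ} (hA : A.PosSemidef)
    (h : B ^ 2 = A) : B = hA.sqrt := by
  rw [hA.sqrt_eq_cfc_sqrt]
  exact (CFC.sqrt_unique (by rw [← sq]; exact h) hB.nonneg).symm

end SqrtPort

/-- Nesterov–Todd scaling point factorization: with Cholesky factorizations `X = L Lᵀ`,
`Z = R Rᵀ` and an SVD `Rᵀ L = U D Vᵀ`, the matrix `G = L V D^{-1/2}` satisfies
`G Gᵀ = W`, where `W = X^{1/2} (X^{1/2} Z X^{1/2})^{-1/2} X^{1/2}` is the scaling point. -/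
theorem nt_scaling_point_factorization {n : Type*} [Fintype n] [DecidableEq n]
    [LinearOrder n]
    (X Z L R U D V : Matrix n n ℝ)
    (hX : X.PosDef) (hZ : Z.PosDef)
    (hXL : X = L * Lᵀ) (hLlow : ∀ i j, i < j → L i j = 0) (hL : IsUnit L)
    (hZR : Z = R * Rᵀ) (hRlow : ∀ i j, i < j → R i j = 0) (hR : IsUnit R)
    (hU : Uᵀ * U = 1 ∧ U * Uᵀ = 1) (hV : Vᵀ * V = 1 ∧ V * Vᵀ = 1)
    (d : n → ℝ) (hd : ∀ i, 0 < d i) (hD : D = Matrix.diagonal d)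
    (hSVD : U * D * Vᵀ = Rᵀ * L)
    (hMid : (hX.posSemidef.sqrt * Z * hX.posSemidef.sqrt).PosSemidef) :
    (L * V * Matrix.diagonal fun i => (Real.sqrt (d i))⁻¹) *
        (L * V * Matrix.diagonal fun i => (Real.sqrt (d i))⁻¹)ᵀ =
      hX.posSemidef.sqrt * (hMid.sqrt)⁻¹ * hX.posSemidef.sqrt := by
  set S := hX.posSemidef.sqrt with hSdef
  have hSS : S * S = X := hX.posSemidef.sqrt_mul_self
  have hSsym : Sᵀ = S := hX.posSemidef.posSemidef_sqrt.isHermitian.eq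
  have hSunit : IsUnit S := by
    have : IsUnit (S.det * S.det) := by
      rw [← det_mul, hSS]
      exact (Matrix.isUnit_iff_isUnit_det X).mp hX.isUnit
    exact (Matrix.isUnit_iff_isUnit_det S).mpr (isUnit_of_mul_isUnit_left this)
  have hLd : IsUnit L.det := (Matrix.isUnit_iff_isUnit_det L).mp hL
  have hSd : IsUnit S.det := (Matrix.isUnit_iff_isUnit_det S).mp hSunit
  -- Q := L⁻¹ * S is orthogonal
  set Q : Matrix n n ℝ := L⁻¹ * S with hQdef
  have hLQ : L * Q = S := by
    rw [hQdef, ← mul_assoc, mul_nonsing_inv _ hLd, one_mul]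
  have hQQ : Qᵀ * Q = 1 := by
    have hXinv : X⁻¹ = S⁻¹ * S⁻¹ := by
      rw [← hSS, Matrix.mul_inv_rev]
    have h1 : Qᵀ * Q = S * ((Lᵀ)⁻¹ * L⁻¹) * S := by
      rw [hQdef, transpose_mul, transpose_nonsing_inv, hSsym]; noncomm_ring
    have h2 : (Lᵀ)⁻¹ * L⁻¹ = X⁻¹ := by
      rw [← Matrix.mul_inv_rev, ← hXL]
    rw [h1, h2, hXinv, show S * (S⁻¹ * S⁻¹) * S = (S * S⁻¹) * (S⁻¹ * S) by noncomm_ring,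
      mul_nonsing_inv _ hSd, nonsing_inv_mul _ hSd, mul_one]
  have hQQ' : Q * Qᵀ = 1 := mul_eq_one_comm.mp hQQ
  -- key identity V D² Vᵀ = Lᵀ Z L
  have hDsym : Dᵀ = D := by rw [hD, diagonal_transpose]
  have hKey : V * (D * D) * Vᵀ = Lᵀ * Z * L := by
    have h1 : (U * D * Vᵀ)ᵀ * (U * D * Vᵀ) = (Rᵀ * L)ᵀ * (Rᵀ * L) := by rw [hSVD]
    calc V * (D * D) * Vᵀ
        = V * Dᵀ * (Uᵀ * U) * (D * Vᵀ) := by rw [hU.1, hDsym]; noncomm_ring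
      _ = (U * D * Vᵀ)ᵀ * (U * D * Vᵀ) := by
          simp only [transpose_mul, transpose_transpose]; noncomm_ring
      _ = (Rᵀ * L)ᵀ * (Rᵀ * L) := h1
      _ = Lᵀ * Z * L := by
          simp only [transpose_mul, transpose_transpose, hZR]; noncomm_ring
  -- N := Qᵀ (V D Vᵀ) Q is the psd sqrt of S Z S
  set N : Matrix n n ℝ := Qᵀ * (V * D * Vᵀ) * Q with hNdef
  have hNpsd : N.PosSemidef := by
    have hDpsd : D.PosSemidef := by
      rw [hD]
      exact posSemidef_diagonal_iff.mpr fun i => (hd i).le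
    have h := hDpsd.conjTranspose_mul_mul_same (Vᵀ * Q)
    have e1 : ((Vᵀ * Q : Matrix n n ℝ))ᴴ = Qᵀ * V := by
      simp [conjTranspose_mul]
    rw [e1] at h
    have : Qᵀ * V * D * (Vᵀ * Q) = N := by rw [hNdef]; noncomm_ring
    rwa [this] at h
  have hNsq : N ^ 2 = S * Z * S := by
    have hSZS : Qᵀ * (Lᵀ * Z * L) * Q = S * Z * S := by
      calc Qᵀ * (Lᵀ * Z * L) * Q = (L * Q)ᵀ * Z * (L * Q) := by
            simp only [transpose_mul]; noncomm_ring
        _ = S * Z * S := by rw [hLQ, hSsym]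
    calc N ^ 2 = Qᵀ * (V * D * (Vᵀ * V) * D * Vᵀ) * Q := by
          rw [hNdef, pow_two]
          rw [show Qᵀ * (V * D * Vᵀ) * Q * (Qᵀ * (V * D * Vᵀ) * Q)
              = Qᵀ * (V * D * Vᵀ) * (Q * Qᵀ) * (V * D * Vᵀ) * Q by noncomm_ring, hQQ']
          noncomm_ring
      _ = Qᵀ * (V * (D * D) * Vᵀ) * Q := by rw [hV.1]; noncomm_ring
      _ = S * Z * S := by rw [hKey, hSZS]
  have hNeq : N = hMid.sqrt := hNpsd.eq_sqrt_of_sq_eq hMid hNsq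
  -- inverse of the sqrt
  have hdne : ∀ i, d i ≠ 0 := fun i => (hd i).ne'
  set P : Matrix n n ℝ := Qᵀ * (V * diagonal (fun i => (d i)⁻¹) * Vᵀ) * Q with hPdef
  have hNP : N * P = 1 := by
    have hDD : D * diagonal (fun i => (d i)⁻¹) = 1 := by
      rw [hD, diagonal_mul_diagonal,
        show (fun i => d i * (d i)⁻¹) = fun _ => (1 : ℝ) from
          funext fun i => mul_inv_cancel₀ (hdne i), diagonal_one]
    calc N * P = Qᵀ * (V * (D * (Vᵀ * V) * diagonal (fun i => (d i)⁻¹)) * Vᵀ) * Q := by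
          rw [hNdef, hPdef]
          rw [show Qᵀ * (V * D * Vᵀ) * Q * (Qᵀ * (V * diagonal (fun i => (d i)⁻¹) * Vᵀ) * Q)
              = Qᵀ * (V * D * Vᵀ) * (Q * Qᵀ) * (V * diagonal (fun i => (d i)⁻¹) * Vᵀ) * Q
              by noncomm_ring, hQQ']
          noncomm_ring
      _ = Qᵀ * (V * Vᵀ) * Q := by rw [hV.1, mul_one, hDD, mul_one]
      _ = 1 := by rw [hV.2, mul_one, hQQ]
  have hinv : (hMid.sqrt)⁻¹ = P := by
    rw [← hNeq]; exact inv_eq_right_inv hNP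
  have hQS : Q * S = Lᵀ := by
    have : (S * Qᵀ)ᵀ = Lᵀ := by
      rw [show S * Qᵀ = L * (Q * Qᵀ) by rw [← hLQ]; noncomm_ring, hQQ', mul_one]
    rw [← this, transpose_mul, hSsym, transpose_transpose]
  have hSQt : S * Qᵀ = L := by
    rw [show S * Qᵀ = L * (Q * Qᵀ) by rw [← hLQ]; noncomm_ring, hQQ', mul_one]
  -- conclude
  have hEE : (diagonal fun i => (Real.sqrt (d i))⁻¹) * (diagonal fun i => (Real.sqrt (d i))⁻¹)
      = diagonal (fun i => (d i)⁻¹) := by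
    rw [diagonal_mul_diagonal,
      show (fun i => (Real.sqrt (d i))⁻¹ * (Real.sqrt (d i))⁻¹) = fun i => (d i)⁻¹ from
        funext fun i => by rw [← mul_inv, Real.mul_self_sqrt (hd i).le]]
  calc (L * V * diagonal fun i => (Real.sqrt (d i))⁻¹) *
        (L * V * diagonal fun i => (Real.sqrt (d i))⁻¹)ᵀ
      = L * V * ((diagonal fun i => (Real.sqrt (d i))⁻¹) *
          (diagonal fun i => (Real.sqrt (d i))⁻¹)) * Vᵀ * Lᵀ := by
        simp only [transpose_mul, diagonal_transpose]; noncomm_ring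
    _ = L * (V * diagonal (fun i => (d i)⁻¹) * Vᵀ) * Lᵀ := by rw [hEE]; noncomm_ring
    _ = (S * Qᵀ) * (V * diagonal (fun i => (d i)⁻¹) * Vᵀ) * (Q * S) := by
        rw [hSQt, hQS]
    _ = S * P * S := by rw [hPdef]; noncomm_ring
    _ = S * (hMid.sqrt)⁻¹ * S := by rw [hinv]
end
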